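/- Let x₁,…,xₙ be distinct complex numbers, let Y be the Calogero–Moser Lax matrix Y_{ik} = −p_i δ_{ik} − (1−δ_{ik})/(x_i − x_k), and let T be the matrix T_{ik} = −δ_{ik} ∑_{j≠i} 2/(x_i − x_j)² + 2(1−δ_{ik})/(x_i − x_k)². If the x_i and p_i depend smoothly on t with ẋ_i = 2 p_i and ṗ_i = −4 ∑_{j≠i} 1/(x_i − x_j)³, then Ẏ = [T, Y]. -/
import Mathlib


open Matrix Finset

/-- The Lax matrix of the rational Calogero–Moser model. -/
noncomputable def CMLax (n : ℕ) (x p : Fin n → ℂ) : Matrix (Fin n) (Fin n) ℂ :=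
  Matrix.of fun i k => if i = k then -p i else -(x i - x k)⁻¹

/-- The auxiliary matrix `T` of the Calogero–Moser Lax pair. -/
noncomputable def CMT (n : ℕ) (x : Fin n → ℂ) : Matrix (Fin n) (Fin n) ℂ :=
  Matrix.of fun i k =>
    if i = k then -∑ j ∈ Finset.univ.erase i, 2 / (x i - x j) ^ 2
    else 2 / (x i - x k) ^ 2

/-- Splitting a sum over all of `Fin n` at two distinct indices. -/
lemma CM_sum_split_two {n : ℕ} {M : Type*} [AddCommMonoid M] (f : Fin n → M)
    (i k : Fin n) (hik : i ≠ k) :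
    ∑ j, f j = f i + f k + ∑ j ∈ (Finset.univ.erase i).erase k, f j := by
  rw [← Finset.sum_erase_add _ _ (Finset.mem_univ i),
    ← Finset.sum_erase_add _ _
      (Finset.mem_erase.mpr ⟨Ne.symm hik, Finset.mem_univ k⟩)]
  abel

/-- Diagonal entry of the commutator. -/
lemma CM_comm_diag (n : ℕ) (x p : Fin n → ℂ)
    (hsep : ∀ i j : Fin n, i ≠ j → x i ≠ x j) (i : Fin n) :
    (CMT n x * CMLax n x p - CMLax n x p * CMT n x) i i
      = -(-4 * ∑ j ∈ Finset.univ.erase i, ((x i - x j) ^ 3)⁻¹) := by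
  simp only [Matrix.sub_apply, Matrix.mul_apply, CMLax, CMT, Matrix.of_apply]
  rw [← Finset.sum_sub_distrib]
  rw [← Finset.sum_erase_add _ _ (Finset.mem_univ i)]
  have h0 : ∀ a b : ℂ, a * b - b * a = 0 := fun a b => by ring
  rw [if_pos rfl, if_pos rfl, h0, add_zero]
  rw [neg_mul, neg_neg, Finset.mul_sum]
  refine Finset.sum_congr rfl fun j hj => ?_
  have hji : j ≠ i := (Finset.mem_erase.mp hj).1
  have hij : x i ≠ x j := hsep i j (Ne.symm hji)
  have h1 : x i - x j ≠ 0 := sub_ne_zero.mpr hij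
  have h2 : x j - x i ≠ 0 := sub_ne_zero.mpr (Ne.symm hij)
  rw [if_neg (fun h => hji (h.symm)), if_neg hji, if_neg (fun h => hji (h.symm)),
    if_neg hji]
  rw [show x j - x i = -(x i - x j) from by ring]
  field_simp
  ring

/-- Off-diagonal entry of the commutator. -/
lemma CM_comm_offdiag (n : ℕ) (x p : Fin n → ℂ)
    (hsep : ∀ i j : Fin n, i ≠ j → x i ≠ x j) (i k : Fin n) (hik : i ≠ k) :
    (CMT n x * CMLax n x p - CMLax n x p * CMT n x) i k
      = -(-((x i - x k) ^ 2)⁻¹ * (2 * p i - 2 * p k)) := by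
  have hki : k ≠ i := Ne.symm hik
  have hxik : x i - x k ≠ 0 := sub_ne_zero.mpr (hsep i k hik)
  have hxki : x k - x i ≠ 0 := sub_ne_zero.mpr (hsep k i hki)
  have hkmem : k ∈ Finset.univ.erase i :=
    Finset.mem_erase.mpr ⟨hki, Finset.mem_univ k⟩
  have himem : i ∈ Finset.univ.erase k :=
    Finset.mem_erase.mpr ⟨hik, Finset.mem_univ i⟩
  simp only [Matrix.sub_apply, Matrix.mul_apply, CMLax, CMT, Matrix.of_apply]
  rw [← Finset.sum_sub_distrib, CM_sum_split_two _ i k hik]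
  have hres : ∑ j ∈ (Finset.univ.erase i).erase k,
      ((if i = j then -∑ l ∈ Finset.univ.erase i, 2 / (x i - x l) ^ 2
          else 2 / (x i - x j) ^ 2) *
        (if j = k then -p j else -(x j - x k)⁻¹) -
        (if i = j then -p i else -(x i - x j)⁻¹) *
        (if j = k then -∑ l ∈ Finset.univ.erase j, 2 / (x j - x l) ^ 2
          else 2 / (x j - x k) ^ 2))
      = (x i - x k)⁻¹ *
        (∑ j ∈ (Finset.univ.erase i).erase k, 2 / (x k - x j) ^ 2
          - ∑ j ∈ (Finset.univ.erase i).erase k, 2 / (x i - x j) ^ 2) := by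
    rw [← Finset.sum_sub_distrib, Finset.mul_sum]
    refine Finset.sum_congr rfl fun j hj => ?_
    have hjk : j ≠ k := (Finset.mem_erase.mp hj).1
    have hji : j ≠ i := (Finset.mem_erase.mp (Finset.mem_erase.mp hj).2).1
    have h1 : x i - x j ≠ 0 := sub_ne_zero.mpr (hsep i j (Ne.symm hji))
    have h2 : x j - x k ≠ 0 := sub_ne_zero.mpr (hsep j k hjk)
    have h3 : x k - x j ≠ 0 := sub_ne_zero.mpr (hsep k j (Ne.symm hjk))
    rw [if_neg (fun h => hji h.symm), if_neg hjk, if_neg (fun h => hji h.symm),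
      if_neg hjk]
    field_simp
    ring
  rw [hres]
  rw [if_pos rfl, if_pos rfl, if_neg hik, if_neg hik, if_pos rfl, if_pos rfl]
  have hBi : ∑ l ∈ Finset.univ.erase i, 2 / (x i - x l) ^ 2
      = 2 / (x i - x k) ^ 2
        + ∑ l ∈ (Finset.univ.erase i).erase k, 2 / (x i - x l) ^ 2 := by
    rw [← Finset.sum_erase_add _ _ hkmem]; abel
  have hBk : ∑ l ∈ Finset.univ.erase k, 2 / (x k - x l) ^ 2
      = 2 / (x k - x i) ^ 2
        + ∑ l ∈ (Finset.univ.erase i).erase k, 2 / (x k - x l) ^ 2 := by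
    rw [← Finset.sum_erase_add _ _ himem,
      Finset.erase_right_comm (a := k) (b := i)]; abel
  rw [hBi, hBk, show x k - x i = -(x i - x k) from by ring]
  set B : ℂ := ∑ l ∈ (Finset.univ.erase i).erase k, 2 / (x i - x l) ^ 2 with hB
  set C : ℂ := ∑ l ∈ (Finset.univ.erase i).erase k, 2 / (x k - x l) ^ 2 with hC
  generalize hd : x i - x k = d at hxik ⊢
  rw [neg_sq]
  ring

/-- If `ẋᵢ = 2pᵢ` and `ṗᵢ = -4 ∑_{j≠i} (xᵢ-xⱼ)⁻³`, then the Lax equation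
`Ẏ = [T, Y]` holds (entrywise). -/
theorem CM_Lax_equation
    (n : ℕ) (x p : ℝ → Fin n → ℂ) (t₀ : ℝ)
    (hsep : ∀ t, ∀ i j : Fin n, i ≠ j → x t i ≠ x t j)
    (hx : ∀ i, HasDerivAt (fun t => x t i) (2 * p t₀ i) t₀)
    (hp : ∀ i, HasDerivAt (fun t => p t i)
      (-4 * ∑ j ∈ Finset.univ.erase i, ((x t₀ i - x t₀ j) ^ 3)⁻¹) t₀) :
    ∀ i k : Fin n,
      HasDerivAt (fun t => CMLax n (x t) (p t) i k)
        ((CMT n (x t₀) * CMLax n (x t₀) (p t₀)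
          - CMLax n (x t₀) (p t₀) * CMT n (x t₀)) i k) t₀ := by
  intro i k
  by_cases hik : i = k
  · subst hik
    have hfun : (fun t => CMLax n (x t) (p t) i i) = fun t => -p t i := by
      funext t; simp [CMLax]
    rw [hfun, CM_comm_diag n (x t₀) (p t₀) (hsep t₀) i]
    exact (hp i).neg
  · have hfun : (fun t => CMLax n (x t) (p t) i k)
        = fun t => -(x t i - x t k)⁻¹ := by
      funext t; simp [CMLax, hik]
    have hc : x t₀ i - x t₀ k ≠ 0 := sub_ne_zero.mpr (hsep t₀ i k hik)
    have hd : HasDerivAt (fun t => x t i - x t k)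
        (2 * p t₀ i - 2 * p t₀ k) t₀ := (hx i).sub (hx k)
    have h2 : HasDerivAt (fun t => (x t i - x t k)⁻¹)
        (-((x t₀ i - x t₀ k) ^ 2)⁻¹ * (2 * p t₀ i - 2 * p t₀ k)) t₀ :=
      (hasDerivAt_inv hc).comp t₀ hd
    rw [hfun, CM_comm_offdiag n (x t₀) (p t₀) (hsep t₀) i k hik]
    exact h2.neg
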